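/- Suppose α ∈ ℝ² and μ > 2 are such that |⟨α, k⟩| ≥ c/|k|^{μ−1} for all nonzero k ∈ ℤ², for some c > 0. Then there exists c' > 0 such that for all mean-zero f ∈ H¹(𝕋²): ‖∇f‖_{L²}^{1−1/μ}·‖⟨∇f, α⟩‖_{L²}^{1/μ} ≥ c'·‖f‖_{L²}. -/

import Mathlib

open Real

/- We model a mean-zero function `f ∈ H¹(𝕋²)` on the flat torus `𝕋² = ℝ²/(2πℤ)²`
by its Fourier coefficients `a : ℤ × ℤ → ℂ`, `f = Σ aₖ e^{ik·x}`, `a₀ = 0`.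
By Parseval, `‖f‖²_{L²} = (2π)² Σ |aₖ|²`, `‖∇f‖²_{L²} = (2π)² Σ |k|²|aₖ|²` and
`‖⟨∇f,α⟩‖²_{L²} = (2π)² Σ ⟨k,α⟩²|aₖ|²`.  All inequalities below are homogeneous
in the number of `L²`-norm factors, so the constant `(2π)²` is harmlessly dropped. -/

/-- `‖f‖²_{L²(𝕋²)}` (modulo the factor `(2π)²`). -/
noncomputable def normSq (a : ℤ × ℤ → ℂ) : ℝ := ∑' k : ℤ × ℤ, ‖a k‖ ^ 2

/-- `‖∇f‖²_{L²(𝕋²)}` (modulo the factor `(2π)²`). -/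
noncomputable def gradSq (a : ℤ × ℤ → ℂ) : ℝ :=
  ∑' k : ℤ × ℤ, (((k.1 : ℝ)) ^ 2 + ((k.2 : ℝ)) ^ 2) * ‖a k‖ ^ 2

/-- `‖⟨∇f, α⟩‖²_{L²(𝕋²)}` (modulo the factor `(2π)²`). -/
noncomputable def dirSq (α : ℝ × ℝ) (a : ℤ × ℤ → ℂ) : ℝ :=
  ∑' k : ℤ × ℤ, (α.1 * k.1 + α.2 * k.2) ^ 2 * ‖a k‖ ^ 2

/-- `f ∈ H¹(𝕋²)`. -/
def IsH1 (a : ℤ × ℤ → ℂ) : Prop :=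
  Summable (fun k : ℤ × ℤ => ‖a k‖ ^ 2) ∧
  Summable (fun k : ℤ × ℤ => (((k.1 : ℝ)) ^ 2 + ((k.2 : ℝ)) ^ 2) * ‖a k‖ ^ 2)

/-- If `μ > 2` and `|⟨α,k⟩| ≥ c/|k|^{μ-1}` for all nonzero `k ∈ ℤ²`, then
`‖∇f‖^{1-1/μ} ⬝ ‖⟨∇f,α⟩‖^{1/μ} ≥ c' ‖f‖` for all mean-zero `f ∈ H¹(𝕋²)`. -/
theorem stmt_15 (α₁ α₂ μ : ℝ) (hμ : 2 < μ) (c : ℝ) (hc : 0 < c)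
    (hα : ∀ k₁ k₂ : ℤ, ¬ (k₁ = 0 ∧ k₂ = 0) →
      |α₁ * k₁ + α₂ * k₂| ≥ c / Real.sqrt ((k₁ : ℝ) ^ 2 + (k₂ : ℝ) ^ 2) ^ (μ - 1)) :
    ∃ c' > (0 : ℝ), ∀ a : ℤ × ℤ → ℂ, IsH1 a → a 0 = 0 →
      Real.sqrt (gradSq a) ^ (1 - 1 / μ) * Real.sqrt (dirSq (α₁, α₂) a) ^ (1 / μ)
        ≥ c' * Real.sqrt (normSq a) := by
  have hμ0 : (0:ℝ) < μ := by linarith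
  have hμ1 : (0:ℝ) < μ - 1 := by linarith
  set p : ℝ := μ / (μ - 1) with hp
  have hpq : p.HolderConjugate μ := by
    rw [Real.holderConjugate_iff]; constructor
    · rw [hp, lt_div_iff₀ hμ1]; linarith
    · rw [hp]; field_simp; ring
  have hp0 : p ≠ 0 := hpq.pos.ne'
  have hinvp : 1 / p = 1 - 1 / μ := by rw [hp]; field_simp
  refine ⟨c ^ (1/μ), Real.rpow_pos_of_pos hc _, ?_⟩
  intro a ⟨hN, hG⟩ ha0
  -- notation
  set w : ℤ × ℤ → ℝ := fun k => ‖a k‖ ^ 2 with hw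
  set t : ℤ × ℤ → ℝ := fun k => ((k.1:ℝ))^2 + ((k.2:ℝ))^2 with htdef
  set d : ℤ × ℤ → ℝ := fun k => (α₁ * k.1 + α₂ * k.2)^2 with hddef
  have hwnn : ∀ k, 0 ≤ w k := fun k => by positivity
  have htnn : ∀ k, 0 ≤ t k := fun k => by positivity
  have hdnn : ∀ k, 0 ≤ d k := fun k => by positivity
  -- summability of d * w by comparison
  have hdt : ∀ k, d k * w k ≤ ((α₁^2 + α₂^2) * t k) * w k := by
    intro k
    have : d k ≤ (α₁^2 + α₂^2) * t k := by
      simp only [hddef, htdef]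
      nlinarith [sq_nonneg (α₁ * (k.2:ℝ) - α₂ * (k.1:ℝ))]
    exact mul_le_mul_of_nonneg_right this (hwnn k)
  have hD : Summable (fun k => d k * w k) := by
    apply Summable.of_nonneg_of_le (fun k => mul_nonneg (hdnn k) (hwnn k)) hdt
    simpa [mul_assoc] using hG.mul_left (α₁^2 + α₂^2)
  have hG' : Summable (fun k => t k * w k) := hG
  -- Hölder factors
  set f : ℤ × ℤ → ℝ := fun k => (t k * w k) ^ (1/p) with hf
  set g : ℤ × ℤ → ℝ := fun k => (d k * w k) ^ (1/μ) with hg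
  have hfp : ∀ k, f k ^ p = t k * w k := by
    intro k
    rw [hf]; simp only [one_div]
    exact Real.rpow_inv_rpow (mul_nonneg (htnn k) (hwnn k)) hp0
  have hgq : ∀ k, g k ^ μ = d k * w k := by
    intro k
    rw [hg]; simp only [one_div]
    exact Real.rpow_inv_rpow (mul_nonneg (hdnn k) (hwnn k)) hμ0.ne'
  have hfnn : ∀ k, 0 ≤ f k := fun k => Real.rpow_nonneg (mul_nonneg (htnn k) (hwnn k)) _
  have hgnn : ∀ k, 0 ≤ g k := fun k => Real.rpow_nonneg (mul_nonneg (hdnn k) (hwnn k)) _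
  have hfsum : Summable (fun k => f k ^ p) := by
    simpa only [hfp] using hG'
  have hgsum : Summable (fun k => g k ^ μ) := by
    simpa only [hgq] using hD
  obtain ⟨hfg_sum, hfg⟩ :=
    summable_and_inner_le_Lp_mul_Lq_tsum_of_nonneg hpq hfnn hgnn hfsum hgsum
  -- pointwise lower bound
  have hpt : ∀ k, c ^ (2/μ) * w k ≤ f k * g k := by
    intro k
    by_cases hk : k = (0 : ℤ × ℤ)
    · have : w k = 0 := by simp [hw, hk, ha0]
      rw [this, mul_zero]
      exact mul_nonneg (hfnn k) (hgnn k)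
    · have hkne : ¬ (k.1 = 0 ∧ k.2 = 0) := by
        intro ⟨h1, h2⟩; exact hk (Prod.ext h1 h2)
      have ht0 : 0 < t k := by
        rcases not_and_or.mp hkne with h | h
        · have : ((k.1:ℝ))^2 > 0 := by positivity
          simp only [htdef]; positivity
        · have : ((k.2:ℝ))^2 > 0 := by positivity
          simp only [htdef]; positivity
      have hd0 : c^2 / t k ^ (μ - 1) ≤ d k := by
        have h1 := hα k.1 k.2 hkne
        have h2 : Real.sqrt (t k) ^ (μ - 1) = t k ^ ((μ-1)/2) := by
          rw [Real.sqrt_eq_rpow, ← Real.rpow_mul (htnn k)]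
          ring_nf
        have hpos : (0:ℝ) < t k ^ ((μ-1)/2) := Real.rpow_pos_of_pos ht0 _
        have h3 : c / t k ^ ((μ-1)/2) ≤ |α₁ * k.1 + α₂ * k.2| := by
          rw [← h2]; exact h1
        have h4 : (c / t k ^ ((μ-1)/2))^2 ≤ (α₁ * k.1 + α₂ * k.2)^2 := by
          rw [← sq_abs (α₁ * (k.1:ℝ) + α₂ * k.2)]
          exact pow_le_pow_left₀ (by positivity) h3 2
        calc c^2 / t k ^ (μ - 1) = (c / t k ^ ((μ-1)/2))^2 := by
              rw [div_pow]
              congr 1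
              rw [← Real.rpow_natCast (t k ^ ((μ-1)/2)) 2, ← Real.rpow_mul (htnn k)]
              norm_num
          _ ≤ d k := h4
      -- reduce to constant bound
      have key : c ^ (2/μ) ≤ t k ^ (1/p) * d k ^ (1/μ) := by
        have h5 : (c^2 / t k ^ (μ-1)) ^ (1/μ) ≤ d k ^ (1/μ) :=
          Real.rpow_le_rpow (by positivity) hd0 (by positivity)
        have h6 : (c^2 / t k ^ (μ-1)) ^ (1/μ) = c ^ (2/μ) / t k ^ (1/p) := by
          rw [Real.div_rpow (by positivity) (by positivity)]
          congr 1
          · rw [← Real.rpow_natCast c 2, ← Real.rpow_mul hc.le]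
            congr 1
            push_cast
            ring
          · rw [← Real.rpow_mul (htnn k)]
            congr 1
            rw [hp]; field_simp
        have ht1 : (0:ℝ) < t k ^ (1/p) := Real.rpow_pos_of_pos ht0 _
        calc c ^ (2/μ) = (c^2 / t k ^ (μ-1)) ^ (1/μ) * t k ^ (1/p) := by
              rw [h6]; field_simp
          _ ≤ d k ^ (1/μ) * t k ^ (1/p) := mul_le_mul_of_nonneg_right h5 ht1.le
          _ = t k ^ (1/p) * d k ^ (1/μ) := mul_comm _ _
      have hfg_eq : f k * g k = (t k ^ (1/p) * d k ^ (1/μ)) * w k := by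
        show (t k * w k) ^ (1/p) * (d k * w k) ^ (1/μ) = _
        rw [Real.mul_rpow (htnn k) (hwnn k), Real.mul_rpow (hdnn k) (hwnn k)]
        have : w k ^ (1/p) * w k ^ (1/μ) = w k := by
          rw [← Real.rpow_add' (hwnn k) (by rw [hinvp]; ring_nf; linarith [one_div_pos.mpr hμ0])]
          rw [hinvp]
          norm_num
        calc t k ^ (1/p) * w k ^ (1/p) * (d k ^ (1/μ) * w k ^ (1/μ))
            = (t k ^ (1/p) * d k ^ (1/μ)) * (w k ^ (1/p) * w k ^ (1/μ)) := by ring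
          _ = (t k ^ (1/p) * d k ^ (1/μ)) * w k := by rw [this]
      rw [hfg_eq]
      exact mul_le_mul_of_nonneg_right key (hwnn k)
  -- sum up
  have hsum : c ^ (2/μ) * normSq a ≤
      (∑' k, f k ^ p) ^ (1/p) * (∑' k, g k ^ μ) ^ (1/μ) := by
    have h1 : c ^ (2/μ) * normSq a = ∑' k, c ^ (2/μ) * w k := by
      rw [normSq, tsum_mul_left]
    rw [h1]
    refine le_trans (Summable.tsum_le_tsum hpt ?_ hfg_sum) hfg
    exact hN.mul_left _
  have hGt : (∑' k, f k ^ p) = gradSq a := by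
    simp only [hfp]; rfl
  have hDt : (∑' k, g k ^ μ) = dirSq (α₁, α₂) a := by
    simp only [hgq]; rfl
  rw [hGt, hDt] at hsum
  -- conclude by taking square roots
  have hGnn : 0 ≤ gradSq a := tsum_nonneg (fun k => mul_nonneg (htnn k) (hwnn k))
  have hDnn : 0 ≤ dirSq (α₁, α₂) a := tsum_nonneg (fun k => mul_nonneg (hdnn k) (hwnn k))
  have hNnn : 0 ≤ normSq a := tsum_nonneg hwnn
  have final : c ^ (1/μ) * Real.sqrt (normSq a) ≤
      Real.sqrt (gradSq a) ^ (1 - 1/μ) * Real.sqrt (dirSq (α₁, α₂) a) ^ (1/μ) := by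
    have lhs_eq : c ^ (1/μ) * Real.sqrt (normSq a) = (c ^ (2/μ) * normSq a) ^ (1/2 : ℝ) := by
      rw [Real.mul_rpow (by positivity) hNnn, Real.sqrt_eq_rpow,
        ← Real.rpow_mul hc.le]
      norm_num
    have rhs_eq : Real.sqrt (gradSq a) ^ (1 - 1/μ) * Real.sqrt (dirSq (α₁, α₂) a) ^ (1/μ)
        = (gradSq a ^ (1/p) * dirSq (α₁, α₂) a ^ (1/μ)) ^ (1/2 : ℝ) := by
      rw [Real.mul_rpow (Real.rpow_nonneg hGnn _) (Real.rpow_nonneg hDnn _),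
        Real.sqrt_eq_rpow, Real.sqrt_eq_rpow,
        ← Real.rpow_mul hGnn, ← Real.rpow_mul hDnn,
        ← Real.rpow_mul hGnn, ← Real.rpow_mul hDnn]
      congr 2
      · rw [hinvp]; ring
      · ring
    rw [lhs_eq, rhs_eq]
    exact Real.rpow_le_rpow (by positivity) hsum (by norm_num)
  exact final
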